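/- Let A ∈ B(H1, H2) with Moore–Penrose inverse B. Then the operator B*(I + BB*)^{-1/2} : H1 → H2 is bounded with closed range, and there is a constant c > 0 such that c‖x‖ ≤ ‖B*(I + BB*)^{-1/2} x‖ ≤ ‖x‖ for all x ∈ R(B); in particular B*(I + BB*)^{-1/2} restricts to an isomorphism from N(B*)^⊥ = cl R(B) onto cl R(B*). -/

import Mathlib

open scoped InnerProductSpace

set_option maxHeartbeats 1000000
set_option synthInstance.maxHeartbeats 1000000

variable {H1 H2 : Type*}
  [NormedAddCommGroup H1] [InnerProductSpace ℂ H1] [CompleteSpace H1]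
  [NormedAddCommGroup H2] [InnerProductSpace ℂ H2] [CompleteSpace H2]

/-- A positive operator commutes with any self-adjoint unitary that commutes with its square. -/
private lemma mp_aux_conj_unitary_comm_sqrt {H : Type*} [NormedAddCommGroup H]
    [InnerProductSpace ℂ H] [CompleteSpace H] (S U : H →L[ℂ] H) (hS : S.IsPositive)
    (hUsa : IsSelfAdjoint U) (hU1 : U * U = 1) (hcomm : U * (S * S) = (S * S) * U) :
    U * S = S * U := by
  have hSnn : (0:H →L[ℂ] H) ≤ S := (ContinuousLinearMap.nonneg_iff_isPositive S).mpr hS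
  let φ : (H →L[ℂ] H) →⋆ₐ[ℂ] (H →L[ℂ] H) :=
  { toFun := fun x => U * x * U
    map_one' := by show U * 1 * U = 1; rw [mul_one, hU1]
    map_mul' := fun x y => by
      show U * (x * y) * U = (U * x * U) * (U * y * U)
      have : (U * x * U) * (U * y * U) = U * x * (U * U) * y * U := by noncomm_ring
      rw [this, hU1, mul_one]; noncomm_ring
    map_zero' := by show U * 0 * U = 0; simp
    map_add' := fun x y => by show U * (x + y) * U = _; noncomm_ring
    commutes' := fun c => by
      show U * algebraMap ℂ _ c * U = _
      simp only [Algebra.algebraMap_eq_smul_one]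
      rw [mul_smul_comm, smul_mul_assoc, mul_one, hU1]
    map_star' := fun x => by
      show U * star x * U = star (U * x * U)
      simp only [star_mul, hUsa.star_eq, mul_assoc] }
  have hφcont : Continuous φ := by
    show Continuous fun x : H →L[ℂ] H => U * x * U
    fun_prop
  have hsq : φ (S * S) = S * S := by
    show U * (S * S) * U = S * S
    rw [hcomm, mul_assoc, hU1, mul_one]
  have hmul : 0 ≤ S * S := by
    rw [ContinuousLinearMap.nonneg_iff_isPositive]
    have := (ContinuousLinearMap.isPositive_one (E := H)).conj_adjoint S
    simp only [hS.isSelfAdjoint.adjoint_eq] at this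
    exact this
  have h1 : φ (CFC.sqrt (S * S)) = CFC.sqrt (φ (S * S)) := by
    rw [CFC.sqrt_eq_cfc, CFC.sqrt_eq_cfc]
    exact StarAlgHom.map_cfc φ NNReal.sqrt (S * S) (hφ := hφcont)
      (hφa := by rw [hsq]; exact hmul)
  rw [hsq, CFC.sqrt_mul_self S hSnn] at h1
  have hthis : U * S * U = S := h1
  have h2 : U * S * U * U = S * U := by rw [hthis]
  rwa [mul_assoc, hU1, mul_one] at h2

private lemma mp_aux_quad {a b c : ℝ} (ha : 0 ≤ a) (hc0 : 0 ≤ c) (hcb : c ≤ b)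
    (hq : ∀ t : ℝ, 0 ≤ a + 2*t*b + t^2*c) : b ≤ a := by
  rcases eq_or_lt_of_le (le_trans hc0 hcb) with hb | hbpos
  · linarith
  rcases eq_or_lt_of_le hc0 with hc | hcpos
  · exfalso
    have h := hq (-(a+1)/(2*b))
    rw [← hc, mul_zero, add_zero] at h
    have hb' : b ≠ 0 := ne_of_gt hbpos
    have e : 2*(-(a+1)/(2*b))*b = -(a+1) := by field_simp
    rw [e] at h
    linarith
  · have h := hq (-(b/c))
    have hc' : c ≠ 0 := ne_of_gt hcpos
    have e : 2*(-(b/c))*b + (-(b/c))^2*c = -(b^2/c) := by field_simp; ring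
    rw [add_assoc, e] at h
    have hb2 : b^2 ≤ a * c := (div_le_iff₀ hcpos).mp (by linarith)
    nlinarith

/-- A positive contraction satisfies `‖S x‖² ≤ re ⟪S x, x⟫`. -/
private lemma mp_aux_pos_contraction_sq_le {H : Type*} [NormedAddCommGroup H]
    [InnerProductSpace ℂ H] [CompleteSpace H] (S : H →L[ℂ] H) (hS : S.IsPositive)
    (hle : ∀ z : H, ‖S z‖ ≤ ‖z‖) (x : H) :
    ‖S x‖ ^ 2 ≤ (⟪S x, x⟫_ℂ).re := by
  have hsymm := ContinuousLinearMap.isSelfAdjoint_iff_isSymmetric.mp hS.isSelfAdjoint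
  have ha : 0 ≤ (⟪S x, x⟫_ℂ).re := (Complex.nonneg_iff.mp (hS.inner_nonneg_left x)).1
  have hc0 : 0 ≤ (⟪S (S x), S x⟫_ℂ).re := (Complex.nonneg_iff.mp (hS.inner_nonneg_left (S x))).1
  have hcb : (⟪S (S x), S x⟫_ℂ).re ≤ ‖S x‖ ^ 2 := by
    calc (⟪S (S x), S x⟫_ℂ).re ≤ ‖⟪S (S x), S x⟫_ℂ‖ := Complex.re_le_norm _
    _ ≤ ‖S (S x)‖ * ‖S x‖ := norm_inner_le_norm _ _
    _ ≤ ‖S x‖ * ‖S x‖ := mul_le_mul_of_nonneg_right (hle (S x)) (norm_nonneg _)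
    _ = ‖S x‖ ^ 2 := (sq (‖S x‖)).symm
  refine mp_aux_quad ha hc0 hcb ?_
  intro t
  have h0 : 0 ≤ (⟪S (x + (t:ℂ) • S x), x + (t:ℂ) • S x⟫_ℂ).re := by
    exact (Complex.nonneg_iff.mp (hS.inner_nonneg_left (x + (t:ℂ) • S x))).1
  have e0 : S (x + (t:ℂ) • S x) = S x + (t:ℂ) • S (S x) := by
    rw [map_add, map_smul]
  have e1 : ⟪S (S x), x⟫_ℂ = ⟪S x, S x⟫_ℂ := hsymm (S x) x
  have e2 : ⟪S x, S x⟫_ℂ = ((‖S x‖^2 : ℝ) : ℂ) := by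
    rw [inner_self_eq_norm_sq_to_K]; norm_cast
  rw [e0, inner_add_left, inner_add_right, inner_add_right, inner_smul_left, inner_smul_left,
    inner_smul_right, inner_smul_right, e1, e2] at h0
  simp only [Complex.conj_ofReal, Complex.add_re, Complex.re_ofReal_mul,
    Complex.ofReal_re] at h0
  nlinarith [h0]
/-- `B` is the Moore–Penrose inverse of the bounded operator `A : H1 → H2`: a closed densely
defined operator with domain `R(A) ⊕ N(A*)`, null space `N(A*)`, satisfying `ABA = A`,
`BAB = B`, `AB ⊆ P_{cl R(A)}` and `BA ⊆ P_{cl R(B)}`. -/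
def IsMPInverse (A : H1 →L[ℂ] H2) (B : H2 →ₗ.[ℂ] H1) : Prop :=
  B.IsClosed ∧ Dense (B.domain : Set H2) ∧
    B.domain = LinearMap.range (A : H1 →ₗ[ℂ] H2) ⊔
      LinearMap.ker (ContinuousLinearMap.adjoint A : H2 →ₗ[ℂ] H1) ∧
    (∀ y : B.domain, B y = 0 ↔ ContinuousLinearMap.adjoint A (y : H2) = 0) ∧
    (∀ x : H1, ∃ h : A x ∈ B.domain, A (B ⟨A x, h⟩) = A x) ∧
    (∀ y : B.domain, ∃ h : A (B y) ∈ B.domain, B ⟨A (B y), h⟩ = B y) ∧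
    (∀ y : B.domain, A (B y) ∈ (LinearMap.range (A : H1 →ₗ[ℂ] H2)).topologicalClosure ∧
      ∀ z ∈ (LinearMap.range (A : H1 →ₗ[ℂ] H2)).topologicalClosure, ⟪(y : H2) - A (B y), z⟫_ℂ = 0) ∧
    (∀ (x : H1) (h : A x ∈ B.domain),
      B ⟨A x, h⟩ ∈ (LinearMap.range B.toFun).topologicalClosure ∧
      ∀ z ∈ (LinearMap.range B.toFun).topologicalClosure, ⟪x - B ⟨A x, h⟩, z⟫_ℂ = 0)

/-- For a bounded `A` with Moore–Penrose inverse `B` and `S = (I + BB*)^{-1/2}`, the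
operator `C = B*(I + BB*)^{-1/2}` is everywhere defined and bounded with closed range, there
is `c > 0` with `c‖x‖ ≤ ‖C x‖ ≤ ‖x‖` for all `x ∈ R(B)`, and `C` restricts to an
isomorphism (a bijection) from `cl R(B) = N(B*)^⊥` onto `cl R(B*)`. -/
theorem mp_sqrt_isomorphism (A : H1 →L[ℂ] H2) (B : H2 →ₗ.[ℂ] H1) (hB : IsMPInverse A B)
    (S : H1 →L[ℂ] H1) (hSpos : S.IsPositive)
    (hS : ∀ x : H1, ∃ h1 : S (S x) ∈ B.adjoint.domain,
      ∃ h2 : B.adjoint ⟨S (S x), h1⟩ ∈ B.domain,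
      S (S x) + B ⟨B.adjoint ⟨S (S x), h1⟩, h2⟩ = x) :
    ∃ C : H1 →L[ℂ] H2,
      (∀ x : H1, ∃ h : S x ∈ B.adjoint.domain, C x = B.adjoint ⟨S x, h⟩) ∧
      IsClosed (Set.range C) ∧
      (∃ c > 0, ∀ x ∈ LinearMap.range B.toFun, c * ‖x‖ ≤ ‖C x‖ ∧ ‖C x‖ ≤ ‖x‖) ∧
      C '' ((LinearMap.range B.toFun).topologicalClosure : Set H1) =
        ((LinearMap.range B.adjoint.toFun).topologicalClosure : Set H2) ∧
      Set.InjOn C ((LinearMap.range B.toFun).topologicalClosure : Set H1) := by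
  obtain ⟨hclosed, hdense, hdom, hker, h5, h6, h7, h8⟩ := hB
  have hfa : B.adjoint.IsFormalAdjoint B := LinearPMap.adjoint_isFormalAdjoint hdense
  have hSsa : ∀ a b : H1, ⟪S a, b⟫_ℂ = ⟪a, S b⟫_ℂ := fun a b => by
    exact (ContinuousLinearMap.isSelfAdjoint_iff_isSymmetric.mp hSpos.isSelfAdjoint) a b
  -- the key norm computation on elements of the form `S (S w)`
  have key2a : ∀ (w : H1) (hh : S (S w) ∈ B.adjoint.domain),
      ‖B.adjoint ⟨S (S w), hh⟩‖ ^ 2 = ‖S w‖ ^ 2 - ‖S (S w)‖ ^ 2 := by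
    intro w hh
    obtain ⟨h1, h2, heq⟩ := hS w
    have hBv : B ⟨B.adjoint ⟨S (S w), h1⟩, h2⟩ = w - S (S w) := eq_sub_of_add_eq' heq
    have c1 : ⟪B.adjoint ⟨S (S w), h1⟩, B.adjoint ⟨S (S w), h1⟩⟫_ℂ
        = ⟪S (S w), B ⟨B.adjoint ⟨S (S w), h1⟩, h2⟩⟫_ℂ :=
      hfa ⟨S (S w), h1⟩ ⟨B.adjoint ⟨S (S w), h1⟩, h2⟩
    rw [hBv, inner_sub_right] at c1
    have c2 : ⟪S (S w), w⟫_ℂ = ⟪S w, S w⟫_ℂ := hSsa (S w) w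
    rw [c2, inner_self_eq_norm_sq_to_K, inner_self_eq_norm_sq_to_K,
      inner_self_eq_norm_sq_to_K] at c1
    have : ((‖B.adjoint ⟨S (S w), h1⟩‖ : ℂ)) ^ 2 = ((‖S w‖ : ℂ)) ^ 2 - ((‖S (S w)‖ : ℂ)) ^ 2 := c1
    have hre : (‖B.adjoint ⟨S (S w), h1⟩‖ : ℝ) ^ 2 = (‖S w‖ : ℝ) ^ 2 - (‖S (S w)‖ : ℝ) ^ 2 := by
      exact_mod_cast this
    exact hre
  -- density of the range of S
  have hinjS : ∀ x : H1, S x = 0 → x = 0 := by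
    intro x hx
    obtain ⟨h1, h2, heq⟩ := hS x
    have hSSx : S (S x) = 0 := by rw [hx, map_zero]
    have e1 : (⟨S (S x), h1⟩ : B.adjoint.domain) = 0 := Subtype.ext hSSx
    have e2 : B.adjoint ⟨S (S x), h1⟩ = 0 := by rw [e1, LinearPMap.map_zero]
    have e3 : (⟨B.adjoint ⟨S (S x), h1⟩, h2⟩ : B.domain) = 0 := Subtype.ext e2
    have e4 : B ⟨B.adjoint ⟨S (S x), h1⟩, h2⟩ = 0 := by rw [e3, LinearPMap.map_zero]
    rw [← heq, e4, add_zero]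
    exact hSSx
  have hKd : Dense ((LinearMap.range (S : H1 →ₗ[ℂ] H1) : Submodule ℂ H1) : Set H1) := by
    have htop : (LinearMap.range (S : H1 →ₗ[ℂ] H1) : Submodule ℂ H1).topologicalClosure = ⊤ := by
      rw [Submodule.topologicalClosure_eq_top_iff]
      rw [Submodule.eq_bot_iff]
      intro z hz
      have hz' : ∀ u : H1, ⟪S u, z⟫_ℂ = 0 := fun u =>
        (Submodule.mem_orthogonal _ z).mp hz (S u) (LinearMap.mem_range_self _ u)
      have h2 : ⟪S z, S z⟫_ℂ = 0 := (hSsa (S z) z).symm.trans (hz' (S z))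
      exact hinjS z (inner_self_eq_zero.mp h2)
    have : ((LinearMap.range (S : H1 →ₗ[ℂ] H1) : Submodule ℂ H1).topologicalClosure : Set H1) = Set.univ := by
      rw [htop]; rfl
    rw [Submodule.topologicalClosure_coe] at this
    exact dense_iff_closure_eq.mpr this
  -- membership of `S ↑v` in the adjoint domain for `v` in the range of `S`
  have hmemS : ∀ v : H1, v ∈ LinearMap.range (S : H1 →ₗ[ℂ] H1) → S v ∈ B.adjoint.domain := by
    rintro v ⟨w, rfl⟩
    obtain ⟨h1, -, -⟩ := hS w
    exact h1
  -- construction of C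
  let f₀ : (LinearMap.range (S : H1 →ₗ[ℂ] H1) : Submodule ℂ H1) →ₗ[ℂ] H2 :=
  { toFun := fun v => B.adjoint ⟨S v, hmemS v v.2⟩
    map_add' := fun u v => by
      have e : (⟨S ((u:H1) + (v:H1)), hmemS _ (u + v).2⟩ : B.adjoint.domain)
          = ⟨S u, hmemS _ u.2⟩ + ⟨S v, hmemS _ v.2⟩ := Subtype.ext (by simp [map_add])
      show B.adjoint ⟨S ((u:H1) + (v:H1)), _⟩ = _
      rw [e, LinearPMap.map_add]
    map_smul' := fun c v => by
      have e : (⟨S ((c • v : (LinearMap.range (S : H1 →ₗ[ℂ] H1) : Submodule ℂ H1)) : H1), hmemS _ (c • v).2⟩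
          : B.adjoint.domain) = c • ⟨S v, hmemS _ v.2⟩ := Subtype.ext (by simp [map_smul])
      show B.adjoint ⟨S ((c • v : (LinearMap.range (S : H1 →ₗ[ℂ] H1) : Submodule ℂ H1)) : H1), _⟩ = _
      rw [e, LinearPMap.map_smul]
      rfl }
  have hf₀b : ∀ v : (LinearMap.range (S : H1 →ₗ[ℂ] H1) : Submodule ℂ H1), ‖f₀ v‖ ≤ 1 * ‖v‖ := by
    intro v
    obtain ⟨w, hw⟩ := v.2
    have e : (⟨S (v:H1), hmemS _ v.2⟩ : B.adjoint.domain)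
        = ⟨S (S w), hmemS (S w) ⟨w, rfl⟩⟩ := Subtype.ext (congrArg S hw).symm
    have : ‖f₀ v‖ ^ 2 = ‖S w‖ ^ 2 - ‖S (S w)‖ ^ 2 := by
      show ‖B.adjoint ⟨S (v:H1), hmemS _ v.2⟩‖ ^ 2 = _
      rw [e]; exact key2a w _
    have hnv : ‖(v : H1)‖ = ‖S w‖ := by rw [← hw]; rfl
    have h2 : ‖f₀ v‖ ^ 2 ≤ ‖(v:H1)‖ ^ 2 := by rw [hnv]; nlinarith [sq_nonneg (‖S (S w)‖)]
    have := (pow_le_pow_iff_left₀ (norm_nonneg (f₀ v)) (norm_nonneg (v:H1)) two_ne_zero).mp h2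
    simpa using this
  let C₁ : (LinearMap.range (S : H1 →ₗ[ℂ] H1) : Submodule ℂ H1) →L[ℂ] H2 := f₀.mkContinuous 1 hf₀b
  let C : H1 →L[ℂ] H2 := C₁.extend (LinearMap.range (S : H1 →ₗ[ℂ] H1) : Submodule ℂ H1).subtypeL
  have hCext : ∀ v : (LinearMap.range (S : H1 →ₗ[ℂ] H1) : Submodule ℂ H1), C v = B.adjoint ⟨S v, hmemS v v.2⟩ := by
    intro v
    have : C ((LinearMap.range (S : H1 →ₗ[ℂ] H1) : Submodule ℂ H1).subtypeL v) = C₁ v :=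
      ContinuousLinearMap.extend_eq _ hKd.denseRange_val isUniformEmbedding_subtype_val.isUniformInducing _
    exact this
  -- the pairing identity for all x
  have hpair : ∀ (x : H1) (v : B.domain), ⟪S x, B v⟫_ℂ = ⟪C x, (v : H2)⟫_ℂ := by
    intro x v
    have hcont1 : Continuous fun y : H1 => ⟪S y, B v⟫_ℂ :=
      Continuous.inner (S.continuous) continuous_const
    have hcont2 : Continuous fun y : H1 => ⟪C y, (v : H2)⟫_ℂ :=
      Continuous.inner (C.continuous) continuous_const
    have heqon : Set.EqOn (fun y : H1 => ⟪S y, B v⟫_ℂ) (fun y : H1 => ⟪C y, (v : H2)⟫_ℂ)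
        ((LinearMap.range (S : H1 →ₗ[ℂ] H1) : Submodule ℂ H1) : Set H1) := by
      intro y hy
      have : C y = B.adjoint ⟨S y, hmemS y hy⟩ := hCext ⟨y, hy⟩
      show ⟪S y, B v⟫_ℂ = ⟪C y, (v : H2)⟫_ℂ
      rw [this]
      exact (hfa ⟨S y, hmemS y hy⟩ v).symm
    have := Continuous.ext_on hKd hcont1 hcont2 heqon
    exact congrFun this x
  have hmem : ∀ x : H1, S x ∈ B.adjoint.domain := fun x =>
    LinearPMap.mem_adjoint_domain_of_exists _ ⟨C x, fun v => (hpair x v).symm⟩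
  have hCeq : ∀ x : H1, B.adjoint ⟨S x, hmem x⟩ = C x := fun x =>
    LinearPMap.adjoint_apply_eq hdense ⟨S x, hmem x⟩ (fun v => (hpair x v).symm)
  -- the norm identity
  have hni : ∀ x : H1, ‖C x‖ ^ 2 = ‖x‖ ^ 2 - ‖S x‖ ^ 2 := by
    have hcont1 : Continuous fun y : H1 => ‖C y‖ ^ 2 + ‖S y‖ ^ 2 := by fun_prop
    have hcont2 : Continuous fun y : H1 => ‖y‖ ^ 2 := by fun_prop
    have heqon : Set.EqOn (fun y : H1 => ‖C y‖ ^ 2 + ‖S y‖ ^ 2) (fun y : H1 => ‖y‖ ^ 2)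
        ((LinearMap.range (S : H1 →ₗ[ℂ] H1) : Submodule ℂ H1) : Set H1) := by
      rintro y ⟨w, rfl⟩
      show ‖C (S w)‖ ^ 2 + ‖S (S w)‖ ^ 2 = ‖S w‖ ^ 2
      rw [← hCeq (S w), key2a w (hmem (S w))]
      ring
    have hfun := Continuous.ext_on hKd hcont1 hcont2 heqon
    intro x
    have := congrFun hfun x
    linarith [this]
  have hCle : ∀ x : H1, ‖C x‖ ≤ ‖x‖ := by
    intro x
    have h2 : ‖C x‖ ^ 2 ≤ ‖x‖ ^ 2 := by nlinarith [hni x, sq_nonneg (‖S x‖)]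
    exact (pow_le_pow_iff_left₀ (norm_nonneg _) (norm_nonneg _) two_ne_zero).mp h2
  have hSle : ∀ x : H1, ‖S x‖ ≤ ‖x‖ := by
    intro x
    have h2 : ‖S x‖ ^ 2 ≤ ‖x‖ ^ 2 := by nlinarith [hni x, sq_nonneg (‖C x‖)]
    exact (pow_le_pow_iff_left₀ (norm_nonneg _) (norm_nonneg _) two_ne_zero).mp h2
  -- facts about M = cl R(B)
  set M : Submodule ℂ H1 := (LinearMap.range B.toFun).topologicalClosure with hM
  have hRB_le_M : ∀ v : B.domain, B v ∈ M := fun v =>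
    Submodule.le_topologicalClosure _ (LinearMap.mem_range_self _ v)
  have hfix : ∀ x ∈ M, ∃ h : A x ∈ B.domain, B ⟨A x, h⟩ = x := by
    intro x hxM
    obtain ⟨h, -⟩ := h5 x
    refine ⟨h, ?_⟩
    obtain ⟨hmemM, hperp⟩ := h8 x h
    have hd : x - B ⟨A x, h⟩ ∈ M := Submodule.sub_mem M hxM hmemM
    have h0 := hperp _ hd
    exact (sub_eq_zero.mp (inner_self_eq_zero.mp h0)).symm
  have hSM2 : ∀ m ∈ M, S (S m) ∈ M := by
    intro m hm
    obtain ⟨h1, h2, heq⟩ := hS m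
    have e : S (S m) = m - B ⟨B.adjoint ⟨S (S m), h1⟩, h2⟩ := (eq_sub_of_add_eq heq)
    rw [e]
    exact Submodule.sub_mem M hm (hRB_le_M _)
  haveI : CompleteSpace M := IsClosed.completeSpace_coe (hs := Submodule.isClosed_topologicalClosure _)
  set P : H1 →L[ℂ] H1 := M.subtypeL.comp (M.orthogonalProjectionOnto) with hP
  have hPmem : ∀ x : H1, P x ∈ M := fun x => (M.orthogonalProjectionOnto x).2
  have hPid : ∀ m ∈ M, P m = m := fun m hm => Submodule.starProjection_eq_self_iff.mpr hm
  have hPperp : ∀ u ∈ Mᗮ, P u = 0 := by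
    intro u hu
    show (↑(M.orthogonalProjectionOnto u) : H1) = 0
    rw [Submodule.orthogonalProjectionOnto_apply_of_mem_orthogonal hu]
    rfl
  have hsubP : ∀ x : H1, x - P x ∈ Mᗮ := fun x => Submodule.sub_starProjection_mem_orthogonal x
  have hSM2perp : ∀ u ∈ Mᗮ, S (S u) ∈ Mᗮ := by
    intro u hu
    rw [Submodule.mem_orthogonal]
    intro m hm
    calc ⟪m, S (S u)⟫_ℂ = ⟪S m, S u⟫_ℂ := (hSsa m (S u)).symm
    _ = ⟪S (S m), u⟫_ℂ := (hSsa (S m) u).symm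
    _ = 0 := (Submodule.mem_orthogonal M u).mp hu _ (hSM2 m hm)
  have hcomm2 : P * (S * S) = (S * S) * P := by
    ext x
    have hxsum : P x + (x - P x) = x := by abel
    have e1 : S (S (P x)) ∈ M := hSM2 _ (hPmem x)
    have e2 : S (S (x - P x)) ∈ Mᗮ := hSM2perp _ (hsubP x)
    show P (S (S x)) = S (S (P x))
    have hsplit : S (S x) = S (S (P x)) + S (S (x - P x)) := by
      conv_lhs => rw [← hxsum]
      rw [map_add, map_add]
    rw [hsplit, map_add, hPid _ e1, hPperp _ e2, add_zero]
  have hPsa : IsSelfAdjoint P := isSelfAdjoint_starProjection M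
  have hPP : P * P = P := by
    ext x
    show P (P x) = P x
    exact hPid _ (hPmem x)
  have hUsa : IsSelfAdjoint (P + P - 1 : H1 →L[ℂ] H1) := (hPsa.add hPsa).sub (IsSelfAdjoint.one (H1 →L[ℂ] H1))
  have hU1 : (P + P - 1 : H1 →L[ℂ] H1) * (P + P - 1) = 1 := by
    have expand : (P + P - 1 : H1 →L[ℂ] H1) * (P + P - 1)
        = (P * P) + (P * P) + (P * P) + (P * P) - P - P - P - P + 1 := by noncomm_ring
    rw [expand, hPP]
    abel
  have hUcomm : (P + P - 1 : H1 →L[ℂ] H1) * (S * S) = (S * S) * (P + P - 1) := by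
    simp only [sub_mul, add_mul, mul_sub, mul_add, one_mul, mul_one, hcomm2]
  have hUS := mp_aux_conj_unitary_comm_sqrt S (P + P - 1) hSpos hUsa hU1 hUcomm
  have hPS : P * S = S * P := by
    have h2 : P * S + P * S - S = S * P + S * P - S := by
      have := hUS
      simp only [sub_mul, add_mul, mul_sub, mul_add, one_mul, mul_one] at this
      exact this
    have h3 : P * S + P * S = S * P + S * P := sub_left_inj.mp h2
    have h4 : (2:ℂ) • (P * S) = (2:ℂ) • (S * P) := by rw [two_smul, two_smul]; exact h3
    exact smul_right_injective _ (by norm_num) h4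
  have hPSpt : ∀ x : H1, P (S x) = S (P x) := by
    intro x
    have := ContinuousLinearMap.ext_iff.mp hPS x
    simpa [ContinuousLinearMap.mul_apply] using this
  have hSM : ∀ m ∈ M, S m ∈ M := by
    intro m hm
    have e := hPSpt m
    rw [hPid m hm] at e
    rw [← e]
    exact hPmem _
  have hSMperp : ∀ u ∈ Mᗮ, S u ∈ Mᗮ := by
    intro u hu
    have e := hPSpt u
    rw [hPperp u hu, map_zero] at e
    have := hsubP (S u)
    rwa [e, sub_zero] at this
  have hkill : ∀ z ∈ Mᗮ, ∀ hz : z ∈ B.adjoint.domain, B.adjoint ⟨z, hz⟩ = 0 := by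
    intro z hzperp hz
    refine LinearPMap.adjoint_apply_eq hdense ⟨z, hz⟩ (fun v => ?_)
    rw [inner_zero_left]
    exact ((Submodule.mem_orthogonal' M z).mp hzperp _ (hRB_le_M v)).symm
  have hCP : ∀ x : H1, C x = C (P x) := by
    intro x
    have hd : S (x - P x) ∈ Mᗮ := hSMperp _ (hsubP x)
    have h0 : C (x - P x) = 0 := by
      rw [← hCeq (x - P x)]
      exact hkill _ hd (hmem _)
    have h1 : C x - C (P x) = 0 := by rw [← map_sub]; exact h0
    exact (sub_eq_zero.mp h1)
  -- the identity C* C = 1 - S²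
  have hCstar : ∀ z : H1, (ContinuousLinearMap.adjoint C) (C z) = z - S (S z) := by
    have hDzero : ∀ x : H1, ⟪((ContinuousLinearMap.adjoint C).comp C
        - (1 - S.comp S) : H1 →L[ℂ] H1) x, x⟫_ℂ = 0 := by
      intro x
      have e0 : ((ContinuousLinearMap.adjoint C).comp C - (1 - S.comp S) : H1 →L[ℂ] H1) x
          = (ContinuousLinearMap.adjoint C) (C x) - x + S (S x) := by
        simp only [ContinuousLinearMap.sub_apply, ContinuousLinearMap.comp_apply,
          ContinuousLinearMap.one_apply]
        abel
      rw [e0, inner_add_left, inner_sub_left]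
      have e1 : ⟪(ContinuousLinearMap.adjoint C) (C x), x⟫_ℂ = ⟪C x, C x⟫_ℂ :=
        ContinuousLinearMap.adjoint_inner_left C x (C x)
      have e2 : ⟪S (S x), x⟫_ℂ = ⟪S x, S x⟫_ℂ := hSsa (S x) x
      rw [e1, e2, inner_self_eq_norm_sq_to_K, inner_self_eq_norm_sq_to_K,
        inner_self_eq_norm_sq_to_K]
      have hreal : ‖C x‖^2 - ‖x‖^2 + ‖S x‖^2 = 0 := by linarith [hni x]
      norm_cast
      rw [hreal]
      norm_num
    have hD : ((ContinuousLinearMap.adjoint C).comp C - (1 - S.comp S) : H1 →L[ℂ] H1) = 0 := by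
      have := (inner_map_self_eq_zero (((ContinuousLinearMap.adjoint C).comp C
        - (1 - S.comp S) : H1 →L[ℂ] H1) : H1 →ₗ[ℂ] H1)).mp (fun x => hDzero x)
      exact ContinuousLinearMap.coe_injective this
    intro z
    have := ContinuousLinearMap.ext_iff.mp hD z
    simp only [ContinuousLinearMap.sub_apply, ContinuousLinearMap.comp_apply,
      ContinuousLinearMap.one_apply, ContinuousLinearMap.zero_apply, sub_eq_zero] at this
    exact this
  -- every element of the adjoint domain is in the range of S
  have hrangeS : ∀ u : B.adjoint.domain,
      S (S (u:H1) + (ContinuousLinearMap.adjoint C) (B.adjoint u)) = (u:H1) := by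
    intro u
    have hin : ∀ w : H1,
        ⟪S (S (u:H1) + (ContinuousLinearMap.adjoint C) (B.adjoint u)) - (u:H1), w⟫_ℂ = 0 := by
      intro w
      obtain ⟨h1, h2, heq⟩ := hS w
      have hBv : B ⟨B.adjoint ⟨S (S w), h1⟩, h2⟩ = w - S (S w) := eq_sub_of_add_eq' heq
      have hCSw : C (S w) = B.adjoint ⟨S (S w), h1⟩ := (hCeq (S w)).symm
      have t1 : ⟪S (S (u:H1)), w⟫_ℂ = ⟪(u:H1), S (S w)⟫_ℂ := by
        rw [hSsa (S (u:H1)) w, hSsa (u:H1) (S w)]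
      have t2 : ⟪S ((ContinuousLinearMap.adjoint C) (B.adjoint u)), w⟫_ℂ
          = ⟪B.adjoint u, C (S w)⟫_ℂ := by
        rw [hSsa ((ContinuousLinearMap.adjoint C) (B.adjoint u)) w]
        exact ContinuousLinearMap.adjoint_inner_left C (S w) (B.adjoint u)
      have t3 : ⟪B.adjoint u, C (S w)⟫_ℂ = ⟪(u:H1), w - S (S w)⟫_ℂ := by
        rw [hCSw]
        have := hfa u ⟨B.adjoint ⟨S (S w), h1⟩, h2⟩
        rw [hBv] at this
        exact this
      have hsplit : S (S (u:H1) + (ContinuousLinearMap.adjoint C) (B.adjoint u))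
          = S (S (u:H1)) + S ((ContinuousLinearMap.adjoint C) (B.adjoint u)) := map_add S _ _
      rw [inner_sub_left, hsplit, inner_add_left, t1, t2, t3, inner_sub_right]
      ring
    have h0 := hin (S (S (u:H1) + (ContinuousLinearMap.adjoint C) (B.adjoint u)) - (u:H1))
    exact sub_eq_zero.mp (inner_self_eq_zero.mp h0)
  -- the lower bound on M
  have hA1pos : (0:ℝ) < 1 + ‖A‖ := by positivity
  have hlow : ∀ x ∈ M, ‖x‖ ≤ (1 + ‖A‖) * ‖C x‖ := by
    intro x hxM
    obtain ⟨hAx, hBAx⟩ := hfix x hxM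
    have e1 : ⟪C x, A x⟫_ℂ = ⟪S x, x⟫_ℂ := by
      rw [← hCeq x]
      have := hfa ⟨S x, hmem x⟩ ⟨A x, hAx⟩
      rw [hBAx] at this
      exact this
    have e2 : ‖S x‖^2 ≤ (⟪S x, x⟫_ℂ).re := mp_aux_pos_contraction_sq_le S hSpos hSle x
    have e3 : (⟪S x, x⟫_ℂ).re ≤ ‖C x‖ * ‖A x‖ := by
      rw [← e1]
      calc (⟪C x, A x⟫_ℂ).re ≤ ‖⟪C x, A x⟫_ℂ‖ := Complex.re_le_norm _
      _ ≤ ‖C x‖ * ‖A x‖ := norm_inner_le_norm _ _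
    have e5 : ‖S x‖^2 ≤ ‖C x‖ * (‖A‖ * ‖x‖) :=
      le_trans (le_trans e2 e3) (mul_le_mul_of_nonneg_left (A.le_opNorm x) (norm_nonneg _))
    have e6 : ‖x‖^2 ≤ ((1 + ‖A‖) * ‖C x‖) * ‖x‖ := by
      have h := hni x
      have hc := hCle x
      nlinarith [norm_nonneg x, norm_nonneg (C x), norm_nonneg A,
        mul_le_mul_of_nonneg_left hc (norm_nonneg (C x))]
    rcases eq_or_lt_of_le (norm_nonneg x) with h0 | hpos
    · rw [← h0]; positivity
    · refine le_of_mul_le_mul_right ?_ hpos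
      calc ‖x‖ * ‖x‖ = ‖x‖^2 := (sq ‖x‖).symm
      _ ≤ ((1+‖A‖) * ‖C x‖) * ‖x‖ := e6
  -- closedness of the image of M
  have hCmAnti : AntilipschitzWith (⟨1 + ‖A‖, hA1pos.le⟩ : NNReal) (C.comp M.subtypeL) := by
    apply ContinuousLinearMap.antilipschitz_of_bound
    intro m
    exact hlow (m:H1) m.2
  have hCmRange : Set.range (C.comp M.subtypeL) = C '' (M : Set H1) := by
    ext y; constructor
    · rintro ⟨m, rfl⟩; exact ⟨m, m.2, rfl⟩
    · rintro ⟨x, hx, rfl⟩; exact ⟨⟨x, hx⟩, rfl⟩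
  have hClosedImage : IsClosed (C '' (M : Set H1)) := by
    rw [← hCmRange]
    exact hCmAnti.isClosed_range (C.comp M.subtypeL).uniformContinuous
  have hRangeC : Set.range C = C '' (M : Set H1) := by
    ext y; constructor
    · rintro ⟨x, rfl⟩; exact ⟨P x, hPmem x, (hCP x).symm⟩
    · rintro ⟨x, hx, rfl⟩; exact ⟨x, rfl⟩
  -- assembly
  refine ⟨C, fun x => ⟨hmem x, (hCeq x).symm⟩, ?_, ?_, ?_, ?_⟩
  · rw [hRangeC]
    exact hClosedImage
  · refine ⟨(1 + ‖A‖)⁻¹, by positivity, fun x hx => ⟨?_, hCle x⟩⟩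
    have hxM : x ∈ M := Submodule.le_topologicalClosure _ hx
    exact (inv_mul_le_iff₀ hA1pos).mpr (hlow x hxM)
  · apply Set.Subset.antisymm
    · rintro y ⟨x, hxM, rfl⟩
      show C x ∈ (LinearMap.range B.adjoint.toFun).topologicalClosure
      exact Submodule.le_topologicalClosure _ ⟨⟨S x, hmem x⟩, hCeq x⟩
    · rw [Submodule.topologicalClosure_coe]
      apply closure_minimal ?_ hClosedImage
      rintro y ⟨u, rfl⟩
      have hx := hrangeS u
      have hsub : (⟨S (S (u:H1) + (ContinuousLinearMap.adjoint C) (B.adjoint u)),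
          hmem _⟩ : B.adjoint.domain) = u := Subtype.ext hx
      have hCx : C (S (u:H1) + (ContinuousLinearMap.adjoint C) (B.adjoint u)) = B.adjoint u := by
        rw [← hCeq (S (u:H1) + (ContinuousLinearMap.adjoint C) (B.adjoint u)), hsub]
      exact ⟨P (S (u:H1) + (ContinuousLinearMap.adjoint C) (B.adjoint u)),
        hPmem _, ((hCP _).symm.trans hCx)⟩
  · intro x hx y hy hxy
    have hsub : x - y ∈ M := Submodule.sub_mem M hx hy
    have h0 : C (x - y) = 0 := by rw [map_sub, hxy, sub_self]
    have h1 := hlow (x - y) hsub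
    rw [h0, norm_zero, mul_zero] at h1
    exact sub_eq_zero.mp (norm_le_zero_iff.mp h1)
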